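/- arXiv:1602.04098 — 2 statements merged into one kernel-verified Lean document; each statement's English description precedes it below -/
import Mathlib

section
/- Let ρ = (r_{ij}) be a 4×4 density matrix on ℂ²⊗ℂ² and define C(ρ) = CNOT (ρ − ρ₁⊗ρ₂) CNOT where ρ₁, ρ₂ are the partial traces. Then Tr((I⊗|1⟩⟨1|) C(ρ)) = 2(r₂₂ r₃₃ − r₁₁ r₄₄). -/
open Matrix Kronecker ComplexOrder

noncomputable def CNOT : Matrix (Fin 2 × Fin 2) (Fin 2 × Fin 2) ℂ :=
  Matrix.of fun p q => if p.1 = q.1 ∧ p.2 = q.1 + q.2 then 1 else 0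

noncomputable def P1m : Matrix (Fin 2) (Fin 2) ℂ := !![0, 0; 0, 1]

noncomputable def ptr2 (ρ : Matrix (Fin 2 × Fin 2) (Fin 2 × Fin 2) ℂ) :
    Matrix (Fin 2) (Fin 2) ℂ :=
  Matrix.of fun i i' => ∑ j, ρ (i, j) (i', j)

noncomputable def ptr1 (ρ : Matrix (Fin 2 × Fin 2) (Fin 2 × Fin 2) ℂ) :
    Matrix (Fin 2) (Fin 2) ℂ :=
  Matrix.of fun j j' => ∑ i, ρ (i, j) (i, j')

noncomputable def prob4 (τ : Matrix (Fin 2 × Fin 2) (Fin 2 × Fin 2) ℂ) : ℂ :=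
  (((1 : Matrix (Fin 2) (Fin 2) ℂ) ⊗ₖ P1m) * τ).trace

noncomputable def prob2 (τ : Matrix (Fin 2) (Fin 2) ℂ) : ℂ :=
  (P1m * τ).trace

theorem holistic_correction_value (ρ : Matrix (Fin 2 × Fin 2) (Fin 2 × Fin 2) ℂ)
    (hρ : ρ.PosSemidef) (hρ1 : ρ.trace = 1) :
    prob4 (CNOT * (ρ - ptr2 ρ ⊗ₖ ptr1 ρ) * CNOT) =
      2 * (ρ (0, 1) (0, 1) * ρ (1, 0) (1, 0) - ρ (0, 0) (0, 0) * ρ (1, 1) (1, 1)) := by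
  have h : ρ (0,0) (0,0) + ρ (0,1) (0,1) + ρ (1,0) (1,0) + ρ (1,1) (1,1) = 1 := by
    rw [← hρ1]
    simp [Matrix.trace, Matrix.diag, Fintype.sum_prod_type, Fin.sum_univ_two]
    ring
  simp only [prob4, CNOT, P1m, ptr1, ptr2, Matrix.trace, Matrix.diag, Matrix.mul_apply,
    Matrix.kroneckerMap_apply, Matrix.sub_apply, Matrix.of_apply, Matrix.one_apply,
    Fintype.sum_prod_type, Fin.sum_univ_two]
  simp only [Prod.mk_zero_zero, Prod.mk_one_one] at h ⊢
  norm_num [Fin.ext_iff, Matrix.cons_val_zero, Matrix.cons_val_one]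
  simp (config := { decide := true }) only [if_true, if_false]
  linear_combination (-(ρ (0,1) (0,1) + ρ (1,0) (1,0))) * h
end

section
/- Let ρ = !![a₁, a; a*, 1−a₁] and σ = !![b₁, b; b*, 1−b₁] be 2×2 density matrices. Then CNOT (ρ ⊗ σ) CNOT is factorizable (equal to the Kronecker product of its two partial traces) if and only if at least one of the following holds: (1) a = 0 and b₁ = ½ and b is real; (2) ρ = P₀ = |0⟩⟨0| or ρ = P₁ = |1⟩⟨1|; (3) σ = ½·!![1,1;1,1] or σ = ½·!![1,−1;−1,1]. -/
open Matrix Kronecker ComplexOrder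

lemma cnot_conj (M : Matrix (Fin 2 × Fin 2) (Fin 2 × Fin 2) ℂ) (p q : Fin 2 × Fin 2) :
    (CNOT * M * CNOT) p q = M (p.1, p.1 + p.2) (q.1, q.1 + q.2) := by
  rcases p with ⟨i, j⟩; rcases q with ⟨k, l⟩
  fin_cases i <;> fin_cases j <;> fin_cases k <;> fin_cases l <;>
    simp [CNOT, Matrix.mul_apply, Fintype.sum_prod_type, Fin.sum_univ_two]

lemma key (ρ σ : Matrix (Fin 2) (Fin 2) ℂ) :
    (CNOT * (ρ ⊗ₖ σ) * CNOT =
      ptr2 (CNOT * (ρ ⊗ₖ σ) * CNOT) ⊗ₖ ptr1 (CNOT * (ρ ⊗ₖ σ) * CNOT)) ↔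
    ∀ i j k l : Fin 2, ρ i k * σ (i+j) (k+l) =
      (ρ i k * σ i k + ρ i k * σ (i+1) (k+1)) *
        (ρ 0 0 * σ j l + ρ 1 1 * σ (1+j) (1+l)) := by
  rw [← Matrix.ext_iff]
  constructor
  · intro H i j k l
    have := H (i,j) (k,l)
    simpa [cnot_conj, ptr2, ptr1, kroneckerMap_apply, Fin.sum_univ_two] using this
  · intro H p q
    rcases p with ⟨i,j⟩; rcases q with ⟨k,l⟩
    have := H i j k l
    simpa [cnot_conj, ptr2, ptr1, kroneckerMap_apply, Fin.sum_univ_two] using this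

lemma offdiag0 {a : ℂ} (h : Matrix.PosSemidef !![(0:ℂ), a; starRingEnd ℂ a, 1]) : a = 0 := by
  by_contra ha
  have hns : (Complex.normSq a : ℂ) ≠ 0 := by
    simpa [Complex.normSq_eq_zero] using ha
  have h1 : (starRingEnd ℂ) a * a = (Complex.normSq a : ℂ) := by
    rw [mul_comm]; exact Complex.mul_conj a
  have hq := h.dotProduct_mulVec_nonneg ![((Complex.normSq a : ℝ)⁻¹ : ℂ) * a, -1]
  simp [dotProduct, Matrix.mulVec, Fin.sum_univ_two] at hq
  rw [show (↑(Complex.normSq a):ℂ)⁻¹ * (starRingEnd ℂ) a * a +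
      (starRingEnd ℂ) a * ((↑(Complex.normSq a):ℂ)⁻¹ * a) = 2 by
    field_simp; linear_combination 2 * h1] at hq
  have := Complex.le_def.mp hq
  norm_num at this

lemma offdiag1 {a : ℂ} (h : Matrix.PosSemidef !![(1:ℂ), a; starRingEnd ℂ a, 0]) : a = 0 := by
  by_contra ha
  have hns : (Complex.normSq a : ℂ) ≠ 0 := by
    simpa [Complex.normSq_eq_zero] using ha
  have h1 : (starRingEnd ℂ) a * a = (Complex.normSq a : ℂ) := by
    rw [mul_comm]; exact Complex.mul_conj a
  have hq := h.dotProduct_mulVec_nonneg ![-1, ((Complex.normSq a : ℝ)⁻¹ : ℂ) * (starRingEnd ℂ) a]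
  simp [dotProduct, Matrix.mulVec, Fin.sum_univ_two] at hq
  rw [show a * ((↑(Complex.normSq a):ℂ)⁻¹ * (starRingEnd ℂ) a) +
      (↑(Complex.normSq a):ℂ)⁻¹ * a * (starRingEnd ℂ) a = 2 by
    field_simp; linear_combination 2 * h1] at hq
  have := Complex.le_def.mp hq
  norm_num at this

set_option maxHeartbeats 1000000 in
theorem cnot_factorizability_characterization
    (a₁ b₁ : ℝ) (a b : ℂ)
    (ha0 : 0 ≤ a₁) (ha1 : a₁ ≤ 1) (hb0 : 0 ≤ b₁) (hb1 : b₁ ≤ 1)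
    (ρ σ : Matrix (Fin 2) (Fin 2) ℂ)
    (hρform : ρ = !![(a₁ : ℂ), a; starRingEnd ℂ a, 1 - (a₁ : ℂ)])
    (hσform : σ = !![(b₁ : ℂ), b; starRingEnd ℂ b, 1 - (b₁ : ℂ)])
    (hρ : ρ.PosSemidef) (hρ1 : ρ.trace = 1)
    (hσ : σ.PosSemidef) (hσ1 : σ.trace = 1) :
    (CNOT * (ρ ⊗ₖ σ) * CNOT =
        ptr2 (CNOT * (ρ ⊗ₖ σ) * CNOT) ⊗ₖ ptr1 (CNOT * (ρ ⊗ₖ σ) * CNOT)) ↔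
      ((a = 0 ∧ b₁ = 1 / 2 ∧ b.im = 0) ∨
       (ρ = !![1, 0; 0, 0] ∨ ρ = !![0, 0; 0, 1]) ∨
       (σ = (1 / 2 : ℂ) • !![1, 1; 1, 1] ∨ σ = (1 / 2 : ℂ) • !![1, -1; -1, 1])) := by
  subst hρform; subst hσform
  rw [key]
  constructor
  · intro H
    by_cases hA0 : a₁ = 0
    · have hA0c : (a₁ : ℂ) = 0 := by exact_mod_cast hA0
      have hm : (!![(a₁:ℂ), a; starRingEnd ℂ a, 1 - (a₁:ℂ)]) =
          !![(0:ℂ), a; starRingEnd ℂ a, 1] := by rw [hA0c]; norm_num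
      rw [hm] at hρ
      have ha : a = 0 := offdiag0 hρ
      refine Or.inr (Or.inl (Or.inr ?_))
      rw [ha, hA0c]
      ext i j; fin_cases i <;> fin_cases j <;> simp
    by_cases hA1 : a₁ = 1
    · have hA1c : (a₁ : ℂ) = 1 := by exact_mod_cast hA1
      have hm : (!![(a₁:ℂ), a; starRingEnd ℂ a, 1 - (a₁:ℂ)]) =
          !![(1:ℂ), a; starRingEnd ℂ a, 0] := by rw [hA1c]; norm_num
      rw [hm] at hρ
      have ha : a = 0 := offdiag1 hρ
      refine Or.inr (Or.inl (Or.inl ?_))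
      rw [ha, hA1c]
      ext i j; fin_cases i <;> fin_cases j <;> simp
    have hAne : (a₁ : ℂ) ≠ 0 := by exact_mod_cast hA0
    have h1A : (a₁ : ℂ) ≠ 1 := by exact_mod_cast hA1
    have hA1ne : (1 : ℂ) - (a₁:ℂ) ≠ 0 := sub_ne_zero.mpr (Ne.symm h1A)
    have E1 := H 0 0 0 0
    have E2 := H 0 0 0 1
    have E3 := H 0 0 1 1
    simp at E1 E2 E3
    have hBeq : (2 * (b₁:ℂ) - 1) = 0 := by
      have hfac : (a₁:ℂ) * ((1 - (a₁:ℂ)) * (2 * (b₁:ℂ) - 1)) = 0 := by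
        linear_combination E1
      rcases mul_eq_zero.mp hfac with hc | hc
      · exact absurd hc hAne
      rcases mul_eq_zero.mp hc with hc | hc
      · exact absurd hc hA1ne
      · exact hc
    have hb₁ : b₁ = 1/2 := by
      have : (2*b₁ - 1 : ℝ) = 0 := by exact_mod_cast hBeq
      linarith
    have hBc : (b₁:ℂ) = 1/2 := by rw [hb₁]; push_cast; ring
    have hdb : starRingEnd ℂ b = b := by
      have hfac : (a₁:ℂ) * ((1 - (a₁:ℂ)) * (b - starRingEnd ℂ b)) = 0 := by
        linear_combination E2
      rcases mul_eq_zero.mp hfac with hc | hc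
      · exact absurd hc hAne
      rcases mul_eq_zero.mp hc with hc | hc
      · exact absurd hc hA1ne
      · linear_combination -hc
    have him : b.im = 0 := Complex.conj_eq_iff_im.mp hdb
    by_cases ha : a = 0
    · exact Or.inl ⟨ha, hb₁, him⟩
    rw [hdb, hBc] at E3
    have hfac : a * ((2*b - 1) * (2*b + 1)) = 0 := by linear_combination (-2 : ℂ) * E3
    rcases mul_eq_zero.mp hfac with hc | hc
    · exact absurd hc ha
    rcases mul_eq_zero.mp hc with hc | hc
    · refine Or.inr (Or.inr (Or.inl ?_))
      have hbv : b = 1/2 := by linear_combination (1/2 : ℂ) * hc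
      rw [hdb, hbv, hBc]
      ext i j; fin_cases i <;> fin_cases j <;> simp <;> norm_num
    · refine Or.inr (Or.inr (Or.inr ?_))
      have hbv : b = -(1/2) := by linear_combination (1/2 : ℂ) * hc
      rw [hdb, hbv, hBc]
      ext i j; fin_cases i <;> fin_cases j <;> simp <;> norm_num
  · rintro (⟨ha, hb₁, him⟩ | (hP | hP) | (hS | hS)) <;> intro i j k l
    · have hdb : starRingEnd ℂ b = b := Complex.conj_eq_iff_im.mpr him
      have hac : starRingEnd ℂ a = 0 := by rw [ha]; simp
      have hBc : (b₁:ℂ) = 1/2 := by rw [hb₁]; push_cast; ring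
      fin_cases i <;> fin_cases j <;> fin_cases k <;> fin_cases l <;>
        simp [ha, hac, hdb, hBc] <;> ring
    · have hA : (a₁:ℂ) = 1 := by have := congrFun (congrFun hP 0) 0; simpa using this
      have ha : a = 0 := by have := congrFun (congrFun hP 0) 1; simpa using this
      have hac : starRingEnd ℂ a = 0 := by rw [ha]; simp
      fin_cases i <;> fin_cases j <;> fin_cases k <;> fin_cases l <;>
        simp [hA, ha, hac] <;> ring
    · have hA : (a₁:ℂ) = 0 := by have := congrFun (congrFun hP 0) 0; simpa using this
      have ha : a = 0 := by have := congrFun (congrFun hP 0) 1; simpa using this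
      have hac : starRingEnd ℂ a = 0 := by rw [ha]; simp
      fin_cases i <;> fin_cases j <;> fin_cases k <;> fin_cases l <;>
        simp [hA, ha, hac] <;> ring
    · have hB : (b₁:ℂ) = 1/2 := by have := congrFun (congrFun hS 0) 0; simpa using this
      have hb : b = 1/2 := by have := congrFun (congrFun hS 0) 1; simpa using this
      have hdb : starRingEnd ℂ b = 1/2 := by
        have := congrFun (congrFun hS 1) 0; simpa using this
      fin_cases i <;> fin_cases j <;> fin_cases k <;> fin_cases l <;>
        simp [hB, hb, hdb, map_inv₀, map_ofNat, map_neg, map_div₀, _root_.map_one] <;> ring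
    · have hB : (b₁:ℂ) = 1/2 := by have := congrFun (congrFun hS 0) 0; simpa using this
      have hb : b = -(1/2) := by have := congrFun (congrFun hS 0) 1; simpa using this
      have hdb : starRingEnd ℂ b = -(1/2) := by
        have := congrFun (congrFun hS 1) 0; simpa using this
      fin_cases i <;> fin_cases j <;> fin_cases k <;> fin_cases l <;>
        simp [hB, hb, hdb, map_inv₀, map_ofNat, map_neg, map_div₀, _root_.map_one] <;> ring
end
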